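/- Fix γ > 0 and assume the kernel and reparameterization regularity: k_θ(x|z) + ‖∇_{(θ,x,z)} k_θ(x|z)‖ ≤ B_k, ‖∇_x k_θ(x|z) − ∇_x k_{θ'}(x'|z')‖ ≤ K_k ‖(θ, x, z) − (θ', x', z')‖, and ‖∇_{(θ,z)} φ_θ(z, ε)‖_F ≤ a_φ‖ε‖ + b_φ. Define Γ^γ_{θ,r}(z, ε) := γ ∇_x q_{θ,r}(x) / (q_{θ,r}(x) + γ)² evaluated at x = φ_θ(z, ε), where q_{θ,r}(x) := ∫ k_θ(x|z) r(dz). Then: (i) ‖Γ^γ_{θ,r}(z, ε)‖ ≤ B_k/γ for all (θ, r, z, ε); and (ii) there exist a_Γ, b_Γ > 0 such that ‖Γ^γ_{θ,r}(z, ε) − Γ^γ_{θ',r'}(z', ε)‖ ≤ (a_Γ‖ε‖ + b_Γ)(‖(θ, z) − (θ', z')‖ + W₁(r, r')) for all θ, θ', z, z', ε and all probability measures r, r' with finite first moment. -/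

import Mathlib

open MeasureTheory Filter Topology
open scoped ENNReal NNReal

/-- Shorthand for Euclidean space `ℝ^n`. -/
abbrev Esp (n : ℕ) : Type := EuclideanSpace ℝ (Fin n)

/-- The Wasserstein-1 cost between two measures: the infimum over couplings `π` (measures on the
product with the given marginals) of `∫ ‖z − z'‖ dπ(z, z')`. -/
noncomputable def W1 {E : Type*} [MeasurableSpace E] [NormedAddCommGroup E]
    (r r' : Measure E) : ℝ≥0∞ :=
  ⨅ π : {π : Measure (E × E) // π.map Prod.fst = r ∧ π.map Prod.snd = r'},
    ∫⁻ p, (‖p.1 - p.2‖₊ : ℝ≥0∞) ∂π.1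

/-- The semi-implicit density `q_{θ,r}(x) = ∫ k_θ(x|z) r(dz)`. -/
noncomputable def qdens {dθ dx dz : ℕ} (k : Esp dθ → Esp dx → Esp dz → ℝ)
    (θ : Esp dθ) (r : Measure (Esp dz)) (x : Esp dx) : ℝ :=
  ∫ z, k θ x z ∂r

/-- The extra drift term `Γ^γ_{θ,r}(z, ε) = γ ∇_x q_{θ,r}(x)/(q_{θ,r}(x) + γ)²` at
`x = φ_θ(z, ε)`. -/
noncomputable def GammaDrift {dθ dx dz : ℕ} (γ : ℝ) (k : Esp dθ → Esp dx → Esp dz → ℝ)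
    (φ : Esp dθ → Esp dz → Esp dx → Esp dx)
    (θ : Esp dθ) (r : Measure (Esp dz)) (z : Esp dz) (ε : Esp dx) : Esp dx :=
  (γ / (qdens k θ r (φ θ z ε) + γ) ^ 2) • gradient (fun x => qdens k θ r x) (φ θ z ε)

section AuxGamma

open InnerProductSpace Set

lemma norm_gradient_eq {E : Type*} [NormedAddCommGroup E] [InnerProductSpace ℝ E]
    [CompleteSpace E] (f : E → ℝ) (x : E) : ‖gradient f x‖ = ‖fderiv ℝ f x‖ := by
  rw [gradient]
  exact LinearIsometryEquiv.norm_map _ _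

lemma frac_diff_le {γ a b : ℝ} (hγ : 0 < γ) (ha : γ ≤ a) (hb : γ ≤ b) :
    |γ / a ^ 2 - γ / b ^ 2| ≤ 2 / γ ^ 2 * |a - b| := by
  have ha0 : 0 < a := hγ.trans_le ha
  have hb0 : 0 < b := hγ.trans_le hb
  have key : ∀ u v : ℝ, γ ≤ u → γ ≤ v → v ≤ u →
      γ / v ^ 2 - γ / u ^ 2 ≤ 2 / γ ^ 2 * (u - v) := by
    intro u v hu hv hvu
    have hu0 : 0 < u := hγ.trans_le hu
    have hv0 : 0 < v := hγ.trans_le hv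
    have hv2 : γ ^ 2 ≤ v ^ 2 := by nlinarith
    have hu2 : γ ^ 2 ≤ u ^ 2 := by nlinarith
    have h4 : γ ^ 2 * (γ * u) ≤ v ^ 2 * u ^ 2 :=
      mul_le_mul hv2 (by nlinarith) (by positivity) (by positivity)
    have h5 : γ ^ 2 * (γ * v) ≤ u ^ 2 * v ^ 2 :=
      mul_le_mul hu2 (by nlinarith) (by positivity) (by positivity)
    have h3 : γ ^ 2 * (γ * (u + v)) ≤ 2 * (v ^ 2 * u ^ 2) := by nlinarith
    have e1 : γ / v ^ 2 - γ / u ^ 2 = γ * (u ^ 2 - v ^ 2) / (v ^ 2 * u ^ 2) := by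
      field_simp
    have e2 : 2 / γ ^ 2 * (u - v) = 2 * (u - v) / γ ^ 2 := by ring
    rw [e1, e2, div_le_div_iff₀ (by positivity) (by positivity)]
    nlinarith [mul_le_mul_of_nonneg_right h3 (sub_nonneg.2 hvu)]
  rcases le_total a b with h | h
  · have h1 : γ / b ^ 2 ≤ γ / a ^ 2 := by gcongr <;> nlinarith
    rw [abs_of_nonneg (by linarith), abs_of_nonpos (by linarith)]
    have := key b a hb ha h
    linarith
  · have h1 : γ / a ^ 2 ≤ γ / b ^ 2 := by gcongr <;> nlinarith
    rw [abs_of_nonpos (by linarith), abs_of_nonneg (by linarith)]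
    have := key a b ha hb h
    linarith

lemma W1_lt_top' {dz : ℕ} (r r' : Measure (Esp dz)) [IsProbabilityMeasure r]
    [IsProbabilityMeasure r'] (hr : (∫⁻ w, (‖w‖₊ : ℝ≥0∞) ∂r) < ⊤)
    (hr' : (∫⁻ w, (‖w‖₊ : ℝ≥0∞) ∂r') < ⊤) : W1 r r' < ⊤ := by
  have hm : (r.prod r').map Prod.fst = r := by simp
  have hm' : (r.prod r').map Prod.snd = r' := by simp
  have hmeas : Measurable (fun w : Esp dz => (‖w‖₊ : ℝ≥0∞)) :=
    measurable_nnnorm.coe_nnreal_ennreal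
  refine lt_of_le_of_lt (iInf_le _ ⟨r.prod r', hm, hm'⟩) ?_
  calc ∫⁻ p, (‖p.1 - p.2‖₊ : ℝ≥0∞) ∂(r.prod r')
      ≤ ∫⁻ p, ((‖p.1‖₊ : ℝ≥0∞) + ‖p.2‖₊) ∂(r.prod r') :=
        lintegral_mono fun p =>
          (ENNReal.coe_le_coe.2 (nnnorm_sub_le _ _)).trans_eq (ENNReal.coe_add _ _)
    _ = (∫⁻ p, (‖p.1‖₊ : ℝ≥0∞) ∂(r.prod r')) + ∫⁻ p, (‖p.2‖₊ : ℝ≥0∞) ∂(r.prod r') :=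
        lintegral_add_left (hmeas.comp measurable_fst) _
    _ = (∫⁻ w, (‖w‖₊ : ℝ≥0∞) ∂((r.prod r').map Prod.fst)) +
        ∫⁻ w, (‖w‖₊ : ℝ≥0∞) ∂((r.prod r').map Prod.snd) := by
        rw [lintegral_map hmeas measurable_fst, lintegral_map hmeas measurable_snd]
    _ = (∫⁻ w, (‖w‖₊ : ℝ≥0∞) ∂r) + ∫⁻ w, (‖w‖₊ : ℝ≥0∞) ∂r' := by rw [hm, hm']
    _ < ⊤ := ENNReal.add_lt_top.2 ⟨hr, hr'⟩

lemma norm_integral_sub_integral_le_W1 {dz : ℕ} {E : Type*} [NormedAddCommGroup E]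
    [NormedSpace ℝ E] [CompleteSpace E] (f : Esp dz → E) (L C : ℝ) (hL : 0 ≤ L)
    (hlip : ∀ w w', ‖f w - f w'‖ ≤ L * ‖w - w'‖) (hbdd : ∀ w, ‖f w‖ ≤ C)
    (r r' : Measure (Esp dz)) [IsProbabilityMeasure r] [IsProbabilityMeasure r']
    (hr : (∫⁻ w, (‖w‖₊ : ℝ≥0∞) ∂r) < ⊤) (hr' : (∫⁻ w, (‖w‖₊ : ℝ≥0∞) ∂r') < ⊤) :
    ‖(∫ w, f w ∂r) - ∫ w, f w ∂r'‖ ≤ L * (W1 r r').toReal := by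
  have hfc : Continuous f := by
    refine (LipschitzWith.of_dist_le_mul (K := ⟨L, hL⟩) fun w w' => ?_).continuous
    rw [dist_eq_norm, dist_eq_norm]
    exact hlip w w'
  have hWtop : W1 r r' < ⊤ := W1_lt_top' r r' hr hr'
  refine le_of_forall_pos_le_add fun δ hδ => ?_
  have hδ1 : 0 < δ / (L + 1) := by positivity
  have hlt : W1 r r' < W1 r r' + ENNReal.ofReal (δ / (L + 1)) :=
    ENNReal.lt_add_right hWtop.ne (by simp [ENNReal.ofReal_pos, hδ1])
  obtain ⟨⟨π, hπ1, hπ2⟩, hπlt⟩ := iInf_lt_iff.mp (show W1 r r' < _ from hlt)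
  haveI hprob : IsProbabilityMeasure π := by
    constructor
    rw [← Set.preimage_univ (f := Prod.fst), ← Measure.map_apply measurable_fst .univ, hπ1,
      measure_univ]
  have hIπ : (∫⁻ p, (‖p.1 - p.2‖₊ : ℝ≥0∞) ∂π) < W1 r r' + ENNReal.ofReal (δ / (L + 1)) := hπlt
  have hItop : (∫⁻ p, (‖p.1 - p.2‖₊ : ℝ≥0∞) ∂π) ≠ ⊤ := (hIπ.trans_le le_top).ne
  have hmeas1 : AEStronglyMeasurable (fun p : Esp dz × Esp dz => f p.1) π :=
    (hfc.comp continuous_fst).aestronglyMeasurable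
  have hmeas2 : AEStronglyMeasurable (fun p : Esp dz × Esp dz => f p.2) π :=
    (hfc.comp continuous_snd).aestronglyMeasurable
  have hint1 : Integrable (fun p : Esp dz × Esp dz => f p.1) π :=
    (integrable_const C).mono' hmeas1 (Eventually.of_forall fun p => hbdd _)
  have hint2 : Integrable (fun p : Esp dz × Esp dz => f p.2) π :=
    (integrable_const C).mono' hmeas2 (Eventually.of_forall fun p => hbdd _)
  have hdmeas : AEStronglyMeasurable (fun p : Esp dz × Esp dz => ‖p.1 - p.2‖) π :=
    (continuous_fst.sub continuous_snd).norm.aestronglyMeasurable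
  have hdint : Integrable (fun p : Esp dz × Esp dz => ‖p.1 - p.2‖) π := by
    refine ⟨hdmeas, ?_⟩
    rw [hasFiniteIntegral_iff_norm]
    have h : ∀ p : Esp dz × Esp dz, ENNReal.ofReal ‖‖p.1 - p.2‖‖ = (‖p.1 - p.2‖₊ : ℝ≥0∞) := by
      intro p; rw [norm_norm, ofReal_norm, enorm_eq_nnnorm]
    simp only [h]
    exact hItop.lt_top
  have heq1 : (∫ w, f w ∂r) = ∫ p, f p.1 ∂π := by
    rw [← hπ1, integral_map measurable_fst.aemeasurable]
    rw [hπ1]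
    exact hfc.aestronglyMeasurable
  have heq2 : (∫ w, f w ∂r') = ∫ p, f p.2 ∂π := by
    rw [← hπ2, integral_map measurable_snd.aemeasurable]
    rw [hπ2]
    exact hfc.aestronglyMeasurable
  have hnormint : (∫ p, ‖p.1 - p.2‖ ∂π) = (∫⁻ p, (‖p.1 - p.2‖₊ : ℝ≥0∞) ∂π).toReal := by
    rw [integral_eq_lintegral_of_nonneg_ae (Eventually.of_forall fun p => norm_nonneg _) hdmeas]
    congr 1
    refine lintegral_congr fun p => ?_
    rw [ofReal_norm, enorm_eq_nnnorm]
  have step : ‖(∫ w, f w ∂r) - ∫ w, f w ∂r'‖ ≤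
      L * (∫⁻ p, (‖p.1 - p.2‖₊ : ℝ≥0∞) ∂π).toReal := by
    rw [heq1, heq2, ← integral_sub hint1 hint2, ← hnormint]
    calc ‖∫ p, (f p.1 - f p.2) ∂π‖ ≤ ∫ p, ‖f p.1 - f p.2‖ ∂π :=
          norm_integral_le_integral_norm _
      _ ≤ ∫ p, L * ‖p.1 - p.2‖ ∂π :=
          integral_mono ((hint1.sub hint2).norm) (hdint.const_mul L) fun p => hlip _ _
      _ = L * ∫ p, ‖p.1 - p.2‖ ∂π := by rw [integral_const_mul]
  refine step.trans ?_
  have h1 : (∫⁻ p, (‖p.1 - p.2‖₊ : ℝ≥0∞) ∂π).toReal ≤ (W1 r r').toReal + δ / (L + 1) := by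
    have h2 := ENNReal.toReal_mono
      (ENNReal.add_lt_top.2 ⟨hWtop, ENNReal.ofReal_lt_top⟩).ne hIπ.le
    rwa [ENNReal.toReal_add hWtop.ne ENNReal.ofReal_ne_top,
      ENNReal.toReal_ofReal hδ1.le] at h2
  have h2 : L * (δ / (L + 1)) ≤ δ := by
    rw [mul_div_assoc']
    rw [div_le_iff₀ (by positivity)]
    nlinarith
  nlinarith [mul_le_mul_of_nonneg_left h1 hL]

/-- The inclusion `v ↦ (0, v, 0)` as a continuous linear map. -/
noncomputable def jxMap (dθ dx dz : ℕ) : Esp dx →L[ℝ] Esp dθ × Esp dx × Esp dz :=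
  (0 : Esp dx →L[ℝ] Esp dθ).prod
    ((ContinuousLinearMap.id ℝ (Esp dx)).prod (0 : Esp dx →L[ℝ] Esp dz))

lemma jxMap_apply {dθ dx dz : ℕ} (v : Esp dx) :
    jxMap dθ dx dz v = ((0, v, 0) : Esp dθ × Esp dx × Esp dz) := rfl

lemma jxMap_norm_le (dθ dx dz : ℕ) : ‖jxMap dθ dx dz‖ ≤ 1 := by
  refine ContinuousLinearMap.opNorm_le_bound _ zero_le_one fun v => ?_
  rw [one_mul, jxMap_apply, Prod.norm_def, Prod.norm_def]
  rw [norm_zero, norm_zero, max_eq_left (norm_nonneg v), max_eq_right (norm_nonneg v)]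

end AuxGamma
/-- Boundedness and Lipschitz continuity of `Γ^γ_{θ,r}`: under kernel and reparameterization
regularity, `‖Γ^γ_{θ,r}(z,ε)‖ ≤ B_k/γ`, and there are `a_Γ, b_Γ > 0` with
`‖Γ^γ_{θ,r}(z,ε) − Γ^γ_{θ',r'}(z',ε)‖ ≤ (a_Γ‖ε‖ + b_Γ)(‖(θ,z) − (θ',z')‖ + W₁(r, r'))`. -/
theorem gamma_drift_bounded_and_lipschitz {dθ dx dz : ℕ} (γ : ℝ) (hγ : 0 < γ)
    (Bk Kk : ℝ) (hBk : 0 < Bk) (hKk : 0 < Kk)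
    (k : Esp dθ → Esp dx → Esp dz → ℝ)
    (hk_nonneg : ∀ θ x z, 0 ≤ k θ x z)
    (hk_diff : Differentiable ℝ (fun q : Esp dθ × Esp dx × Esp dz => k q.1 q.2.1 q.2.2))
    (hk_bdd : ∀ (θ : Esp dθ) (x : Esp dx) (z : Esp dz),
      k θ x z + ‖fderiv ℝ (fun q : Esp dθ × Esp dx × Esp dz => k q.1 q.2.1 q.2.2) (θ, x, z)‖ ≤ Bk)
    (hk_gradlip : ∀ (θ θ' : Esp dθ) (x x' : Esp dx) (z z' : Esp dz),
      ‖gradient (fun y => k θ y z) x - gradient (fun y => k θ' y z') x'‖ ≤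
        Kk * ‖((θ, x, z) : Esp dθ × Esp dx × Esp dz) - (θ', x', z')‖)
    (φ : Esp dθ → Esp dz → Esp dx → Esp dx)
    (aφ bφ : ℝ) (haφ : 0 ≤ aφ) (hbφ : 0 < bφ)
    (hφ_diff : ∀ ε, Differentiable ℝ (fun q : Esp dθ × Esp dz => φ q.1 q.2 ε))
    (hφ_bdd : ∀ (θ : Esp dθ) (z : Esp dz) (ε : Esp dx),
      ‖fderiv ℝ (fun q : Esp dθ × Esp dz => φ q.1 q.2 ε) (θ, z)‖ ≤ aφ * ‖ε‖ + bφ) :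
    (∀ (θ : Esp dθ) (z : Esp dz) (ε : Esp dx) (r : Measure (Esp dz)),
      IsProbabilityMeasure r → ‖GammaDrift γ k φ θ r z ε‖ ≤ Bk / γ) ∧
    (∃ aΓ bΓ : ℝ, 0 < aΓ ∧ 0 < bΓ ∧
      ∀ (θ θ' : Esp dθ) (z z' : Esp dz) (ε : Esp dx)
        (r r' : Measure (Esp dz)),
        IsProbabilityMeasure r → IsProbabilityMeasure r' →
        (∫⁻ w, (‖w‖₊ : ℝ≥0∞) ∂r) < ⊤ → (∫⁻ w, (‖w‖₊ : ℝ≥0∞) ∂r') < ⊤ →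
        ‖GammaDrift γ k φ θ r z ε - GammaDrift γ k φ θ' r' z' ε‖ ≤
          (aΓ * ‖ε‖ + bΓ) * (‖((θ, z) : Esp dθ × Esp dz) - (θ', z')‖ + (W1 r r').toReal)) := by
  -- basic bounds on `k` and its derivative
  have hfb : ∀ (θ : Esp dθ) (x : Esp dx) (w : Esp dz),
      ‖fderiv ℝ (fun p : Esp dθ × Esp dx × Esp dz => k p.1 p.2.1 p.2.2) (θ, x, w)‖ ≤ Bk := by
    intro θ x w
    have h1 := hk_bdd θ x w
    have h2 := hk_nonneg θ x w
    linarith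
  have hkb : ∀ (θ : Esp dθ) (x : Esp dx) (w : Esp dz), k θ x w ≤ Bk := by
    intro θ x w
    have h1 := hk_bdd θ x w
    have h2 := norm_nonneg
      (fderiv ℝ (fun p : Esp dθ × Esp dx × Esp dz => k p.1 p.2.1 p.2.2) (θ, x, w))
    linarith
  have hklip : ∀ p p' : Esp dθ × Esp dx × Esp dz,
      |k p.1 p.2.1 p.2.2 - k p'.1 p'.2.1 p'.2.2| ≤ Bk * ‖p - p'‖ := by
    have hl : LipschitzWith ⟨Bk, hBk.le⟩
        (fun p : Esp dθ × Esp dx × Esp dz => k p.1 p.2.1 p.2.2) := by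
      refine lipschitzWith_of_nnnorm_fderiv_le hk_diff fun p => ?_
      refine NNReal.coe_le_coe.1 ?_
      exact hfb p.1 p.2.1 p.2.2
    intro p p'
    have h := hl.dist_le_mul p p'
    rwa [Real.dist_eq, dist_eq_norm] at h
  have trinorm : ∀ (a : Esp dθ) (b : Esp dx) (c : Esp dz),
      ‖((a, b, c) : Esp dθ × Esp dx × Esp dz)‖ = max ‖a‖ (max ‖b‖ ‖c‖) := by
    intro a b c
    rw [Prod.norm_def, Prod.norm_def]
  -- derivative of `k` in the `x` variable
  have hx_deriv : ∀ (θ : Esp dθ) (x : Esp dx) (w : Esp dz),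
      HasFDerivAt (fun y => k θ y w)
        ((fderiv ℝ (fun p : Esp dθ × Esp dx × Esp dz => k p.1 p.2.1 p.2.2) (θ, x, w)).comp
          (jxMap dθ dx dz)) x := by
    intro θ x w
    have hin : HasFDerivAt (fun y : Esp dx => ((θ, y, w) : Esp dθ × Esp dx × Esp dz))
        (jxMap dθ dx dz) x :=
      HasFDerivAt.prodMk (hasFDerivAt_const θ x) ((hasFDerivAt_id x).prodMk (hasFDerivAt_const w x))
    exact ((hk_diff (θ, x, w)).hasFDerivAt.comp x hin)
  have hgxnorm : ∀ (θ : Esp dθ) (x : Esp dx) (w : Esp dz),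
      ‖gradient (fun y => k θ y w) x‖ ≤ Bk := by
    intro θ x w
    rw [norm_gradient_eq, (hx_deriv θ x w).fderiv]
    refine le_trans (ContinuousLinearMap.opNorm_comp_le _ _) ?_
    calc _ ≤ Bk * 1 :=
          mul_le_mul (hfb θ x w) (jxMap_norm_le _ _ _) (norm_nonneg _) hBk.le
      _ = Bk := mul_one Bk
  have hgx_cont : ∀ (θ : Esp dθ) (x : Esp dx),
      Continuous (fun w => gradient (fun y => k θ y w) x) := by
    intro θ x
    refine (LipschitzWith.of_dist_le_mul (K := ⟨Kk, hKk.le⟩) fun w w' => ?_).continuous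
    rw [dist_eq_norm, dist_eq_norm]
    refine (hk_gradlip θ θ x x w w').trans ?_
    rw [show ((θ, x, w) : Esp dθ × Esp dx × Esp dz) - (θ, x, w') = (θ - θ, x - x, w - w')
      from rfl, sub_self, sub_self, trinorm, norm_zero, norm_zero,
      max_eq_right (norm_nonneg _), max_eq_right (norm_nonneg _)]
    exact le_rfl
  -- integrability of the kernel and its gradient over probability measures
  have hkint : ∀ (θ : Esp dθ) (x : Esp dx) (r : Measure (Esp dz)), IsProbabilityMeasure r →
      Integrable (fun w => k θ x w) r := by
    intro θ x r hr
    haveI := hr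
    have hc : Continuous (fun w => k θ x w) :=
      hk_diff.continuous.comp (continuous_const.prodMk (continuous_const.prodMk continuous_id))
    refine (integrable_const Bk).mono' hc.aestronglyMeasurable
      (Eventually.of_forall fun w => ?_)
    rw [Real.norm_eq_abs, abs_of_nonneg (hk_nonneg θ x w)]
    exact hkb θ x w
  have hgint : ∀ (θ : Esp dθ) (x : Esp dx) (r : Measure (Esp dz)), IsProbabilityMeasure r →
      Integrable (fun w => gradient (fun y => k θ y w) x) r := by
    intro θ x r hr
    haveI := hr
    exact (integrable_const Bk).mono' (hgx_cont θ x).aestronglyMeasurable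
      (Eventually.of_forall fun w => hgxnorm θ x w)
  -- the gradient of q is the integral of the gradient of the kernel
  have key : ∀ (θ : Esp dθ) (r : Measure (Esp dz)), IsProbabilityMeasure r → ∀ x : Esp dx,
      HasGradientAt (qdens k θ r) (∫ w, gradient (fun y => k θ y w) x ∂r) x := by
    intro θ r hr x
    haveI := hr
    have hkcont : ∀ y : Esp dx, Continuous fun w => k θ y w := fun y =>
      hk_diff.continuous.comp (continuous_const.prodMk (continuous_const.prodMk continuous_id))
    have hlipy : ∀ w : Esp dz,
        LipschitzOnWith (Real.nnabs Bk) (fun y => k θ y w) (Metric.ball x 1) := by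
      intro w
      refine LipschitzWith.lipschitzOnWith ?_
      refine LipschitzWith.of_dist_le_mul fun y y' => ?_
      rw [Real.dist_eq, dist_eq_norm]
      refine (hklip (θ, y, w) (θ, y', w)).trans ?_
      rw [show ((θ, y, w) : Esp dθ × Esp dx × Esp dz) - (θ, y', w) = (θ - θ, y - y', w - w)
        from rfl, sub_self, sub_self, trinorm, norm_zero, norm_zero,
        max_eq_left (norm_nonneg _), max_eq_right (norm_nonneg _)]
      have : (Real.nnabs Bk : ℝ) = Bk := by
        rw [Real.coe_nnabs, abs_of_pos hBk]
      rw [this]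
    have hdiffy : ∀ w : Esp dz,
        HasFDerivAt (fun y => k θ y w)
          ((InnerProductSpace.toDual ℝ (Esp dx)) (gradient (fun y => k θ y w) x)) x := by
      intro w
      exact hasGradientAt_iff_hasFDerivAt.mp (hx_deriv θ x w).differentiableAt.hasGradientAt
    have main := hasFDerivAt_integral_of_dominated_loc_of_lip
      (F := fun (y : Esp dx) (w : Esp dz) => k θ y w)
      (F' := fun w => (InnerProductSpace.toDual ℝ (Esp dx)) (gradient (fun y => k θ y w) x))
      (x₀ := x) (bound := fun _ => Bk) (s := Metric.ball x 1) (Metric.ball_mem_nhds x one_pos)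
      (Eventually.of_forall fun y => (hkcont y).aestronglyMeasurable)
      (hkint θ x r hr)
      (Continuous.aestronglyMeasurable
        ((InnerProductSpace.toDual ℝ (Esp dx)).continuous.comp (hgx_cont θ x)))
      (Eventually.of_forall hlipy)
      (integrable_const Bk)
      (Eventually.of_forall hdiffy)
    have hmain := main.2
    have hintegral : (∫ w, (InnerProductSpace.toDual ℝ (Esp dx)) (gradient (fun y => k θ y w) x) ∂r) =
        (InnerProductSpace.toDual ℝ (Esp dx)) (∫ w, gradient (fun y => k θ y w) x ∂r) :=
      (InnerProductSpace.toDual ℝ (Esp dx)).toLinearIsometry.integral_comp_comm _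
    rw [hintegral] at hmain
    exact hasGradientAt_iff_hasFDerivAt.mpr hmain
  -- basic facts about `qdens`
  have hq_nonneg : ∀ (θ : Esp dθ) (r : Measure (Esp dz)) (x : Esp dx), 0 ≤ qdens k θ r x :=
    fun θ r x => integral_nonneg fun w => hk_nonneg θ x w
  have hqgradnorm : ∀ (θ : Esp dθ) (r : Measure (Esp dz)), IsProbabilityMeasure r →
      ∀ x : Esp dx, ‖∫ w, gradient (fun y => k θ y w) x ∂r‖ ≤ Bk := by
    intro θ r hr x
    haveI := hr
    refine (norm_integral_le_of_norm_le (integrable_const Bk)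
      (Eventually.of_forall fun w => hgxnorm θ x w)).trans ?_
    simp [measure_univ]
  constructor
  · -- Part (i): boundedness
    intro θ z ε r hr
    haveI := hr
    have hg := (key θ r hr (φ θ z ε)).gradient
    have hΓ : GammaDrift γ k φ θ r z ε =
        (γ / (qdens k θ r (φ θ z ε) + γ) ^ 2) •
          (∫ w, gradient (fun y => k θ y w) (φ θ z ε) ∂r) := by
      simp only [GammaDrift]
      rw [show (fun y => qdens k θ r y) = qdens k θ r from rfl, hg]
    rw [hΓ, norm_smul, Real.norm_eq_abs]
    have h0 : 0 ≤ qdens k θ r (φ θ z ε) := hq_nonneg θ r _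
    have h1 : |γ / (qdens k θ r (φ θ z ε) + γ) ^ 2| = γ / (qdens k θ r (φ θ z ε) + γ) ^ 2 :=
      abs_of_pos (by positivity)
    have h2 : γ / (qdens k θ r (φ θ z ε) + γ) ^ 2 ≤ 1 / γ := by
      rw [div_le_div_iff₀ (by positivity) hγ]
      nlinarith
    calc |γ / (qdens k θ r (φ θ z ε) + γ) ^ 2| *
          ‖∫ w, gradient (fun y => k θ y w) (φ θ z ε) ∂r‖
        ≤ (1 / γ) * Bk := by
          rw [h1]
          exact mul_le_mul h2 (hqgradnorm θ r hr _) (norm_nonneg _) (by positivity)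
      _ = Bk / γ := one_div_mul_eq_div γ Bk
  · -- Part (ii): Lipschitz continuity
    refine ⟨(Kk / γ + 2 * Bk ^ 2 / γ ^ 2) * (aφ + 1), (Kk / γ + 2 * Bk ^ 2 / γ ^ 2) * (bφ + 1),
      by positivity, by positivity, ?_⟩
    intro θ θ' z z' ε r r' hr hr' hrm hrm'
    haveI := hr
    haveI := hr'
    set x := φ θ z ε with hxd
    set x' := φ θ' z' ε with hxd'
    have hgu := (key θ r hr x).gradient
    have hgv := (key θ' r' hr' x').gradient
    set u := ∫ w, gradient (fun y => k θ y w) x ∂r with hud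
    set v := ∫ w, gradient (fun y => k θ' y w) x' ∂r' with hvd
    set q := qdens k θ r x with hqd
    set q' := qdens k θ' r' x' with hq'd
    have hΓ : GammaDrift γ k φ θ r z ε = (γ / (q + γ) ^ 2) • u := by
      simp only [GammaDrift]
      rw [← hxd, show (fun y => qdens k θ r y) = qdens k θ r from rfl, hgu, ← hqd]
    have hΓ' : GammaDrift γ k φ θ' r' z' ε = (γ / (q' + γ) ^ 2) • v := by
      simp only [GammaDrift]
      rw [← hxd', show (fun y => qdens k θ' r' y) = qdens k θ' r' from rfl, hgv, ← hq'd]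
    -- distance between evaluation points
    have hxx' : ‖x - x'‖ ≤ (aφ * ‖ε‖ + bφ) * ‖((θ, z) : Esp dθ × Esp dz) - (θ', z')‖ := by
      rw [hxd, hxd']
      have h := Convex.norm_image_sub_le_of_norm_fderiv_le
        (f := fun p : Esp dθ × Esp dz => φ p.1 p.2 ε)
        (fun p _ => (hφ_diff ε) p)
        (fun p _ => by simpa using hφ_bdd p.1 p.2 ε)
        convex_univ (Set.mem_univ (θ', z')) (Set.mem_univ (θ, z))
      simpa using h
    have hθθ' : ‖θ - θ'‖ ≤ ‖((θ, z) : Esp dθ × Esp dz) - (θ', z')‖ := by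
      rw [show ((θ, z) : Esp dθ × Esp dz) - (θ', z') = (θ - θ', z - z') from rfl, Prod.norm_def]
      exact le_max_left _ _
    have hmaxA : max ‖θ - θ'‖ ‖x - x'‖ ≤
        (aφ * ‖ε‖ + bφ + 1) * ‖((θ, z) : Esp dθ × Esp dz) - (θ', z')‖ := by
      have hD0 : 0 ≤ ‖((θ, z) : Esp dθ × Esp dz) - (θ', z')‖ := norm_nonneg _
      have hM0 : 0 ≤ aφ * ‖ε‖ + bφ := by positivity
      refine max_le (hθθ'.trans (le_mul_of_one_le_left hD0 (by linarith)))
        (hxx'.trans (mul_le_mul_of_nonneg_right (by linarith) hD0))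
    -- pointwise bounds in the (θ, x) variables
    have hptk : ∀ w : Esp dz, ‖k θ x w - k θ' x' w‖ ≤ Bk * max ‖θ - θ'‖ ‖x - x'‖ := by
      intro w
      rw [Real.norm_eq_abs]
      refine (hklip (θ, x, w) (θ', x', w)).trans ?_
      rw [show ((θ, x, w) : Esp dθ × Esp dx × Esp dz) - (θ', x', w) = (θ - θ', x - x', w - w)
        from rfl, sub_self, trinorm, norm_zero, max_eq_left (norm_nonneg _)]
    have hptg : ∀ w : Esp dz,
        ‖gradient (fun y => k θ y w) x - gradient (fun y => k θ' y w) x'‖ ≤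
          Kk * max ‖θ - θ'‖ ‖x - x'‖ := by
      intro w
      refine (hk_gradlip θ θ' x x' w w).trans ?_
      rw [show ((θ, x, w) : Esp dθ × Esp dx × Esp dz) - (θ', x', w) = (θ - θ', x - x', w - w)
        from rfl, sub_self, trinorm, norm_zero, max_eq_left (norm_nonneg _)]
    -- Lipschitz bounds in the `z` variable
    have hkzlip : ∀ w w' : Esp dz, ‖k θ' x' w - k θ' x' w'‖ ≤ Bk * ‖w - w'‖ := by
      intro w w'
      rw [Real.norm_eq_abs]
      refine (hklip (θ', x', w) (θ', x', w')).trans ?_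
      rw [show ((θ', x', w) : Esp dθ × Esp dx × Esp dz) - (θ', x', w') =
        (θ' - θ', x' - x', w - w') from rfl, sub_self, sub_self, trinorm, norm_zero, norm_zero,
        max_eq_right (norm_nonneg _), max_eq_right (norm_nonneg _)]
    have hgzlip : ∀ w w' : Esp dz,
        ‖gradient (fun y => k θ' y w) x' - gradient (fun y => k θ' y w') x'‖ ≤ Kk * ‖w - w'‖ := by
      intro w w'
      refine (hk_gradlip θ' θ' x' x' w w').trans ?_
      rw [show ((θ', x', w) : Esp dθ × Esp dx × Esp dz) - (θ', x', w') =
        (θ' - θ', x' - x', w - w') from rfl, sub_self, sub_self, trinorm, norm_zero, norm_zero,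
        max_eq_right (norm_nonneg _), max_eq_right (norm_nonneg _)]
    -- difference of the densities
    have ht1 : |q - qdens k θ' r x'| ≤ Bk * max ‖θ - θ'‖ ‖x - x'‖ := by
      rw [hqd]
      simp only [qdens]
      rw [← integral_sub (hkint θ x r hr) (hkint θ' x' r hr), ← Real.norm_eq_abs]
      refine (norm_integral_le_of_norm_le (integrable_const (Bk * max ‖θ - θ'‖ ‖x - x'‖))
        (Eventually.of_forall fun w => hptk w)).trans ?_
      simp [measure_univ]
    have ht2 : |qdens k θ' r x' - q'| ≤ Bk * (W1 r r').toReal := by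
      rw [hq'd]
      simp only [qdens]
      rw [← Real.norm_eq_abs]
      exact norm_integral_sub_integral_le_W1 (fun w => k θ' x' w) Bk Bk hBk.le hkzlip
        (fun w => by rw [Real.norm_eq_abs, abs_of_nonneg (hk_nonneg θ' x' w)]; exact hkb θ' x' w)
        r r' hrm hrm'
    have hqdiff : |q - q'| ≤
        Bk * ((aφ * ‖ε‖ + bφ + 1) * ‖((θ, z) : Esp dθ × Esp dz) - (θ', z')‖)
          + Bk * (W1 r r').toReal := by
      refine (abs_sub_le q (qdens k θ' r x') q').trans ?_
      have h := mul_le_mul_of_nonneg_left hmaxA hBk.le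
      linarith
    -- difference of the gradients
    have hudiff : ‖u - v‖ ≤
        Kk * ((aφ * ‖ε‖ + bφ + 1) * ‖((θ, z) : Esp dθ × Esp dz) - (θ', z')‖)
          + Kk * (W1 r r').toReal := by
      have t1 : ‖u - ∫ w, gradient (fun y => k θ' y w) x' ∂r‖ ≤
          Kk * max ‖θ - θ'‖ ‖x - x'‖ := by
        rw [hud, ← integral_sub (hgint θ x r hr) (hgint θ' x' r hr)]
        refine (norm_integral_le_of_norm_le (integrable_const (Kk * max ‖θ - θ'‖ ‖x - x'‖))
          (Eventually.of_forall fun w => hptg w)).trans ?_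
        simp [measure_univ]
      have t2 : ‖(∫ w, gradient (fun y => k θ' y w) x' ∂r) - v‖ ≤ Kk * (W1 r r').toReal := by
        rw [hvd]
        exact norm_integral_sub_integral_le_W1 (fun w => gradient (fun y => k θ' y w) x')
          Kk Bk hKk.le hgzlip (fun w => hgxnorm θ' x' w) r r' hrm hrm'
      have tri := dist_triangle u (∫ w, gradient (fun y => k θ' y w) x' ∂r) v
      rw [dist_eq_norm, dist_eq_norm, dist_eq_norm] at tri
      have h := mul_le_mul_of_nonneg_left hmaxA hKk.le
      linarith
    -- putting everything together
    have hq0 : 0 ≤ q := by rw [hqd]; exact hq_nonneg θ r x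
    have hq0' : 0 ≤ q' := by rw [hq'd]; exact hq_nonneg θ' r' x'
    have hvnorm : ‖v‖ ≤ Bk := by rw [hvd]; exact hqgradnorm θ' r' hr' x'
    have ha : γ ≤ q + γ := by linarith
    have hb : γ ≤ q' + γ := by linarith
    have hdecomp : GammaDrift γ k φ θ r z ε - GammaDrift γ k φ θ' r' z' ε =
        (γ / (q + γ) ^ 2) • (u - v) + (γ / (q + γ) ^ 2 - γ / (q' + γ) ^ 2) • v := by
      rw [hΓ, hΓ', smul_sub, sub_smul]
      abel
    have hfrac1 : |γ / (q + γ) ^ 2| ≤ 1 / γ := by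
      rw [abs_of_pos (by positivity), div_le_div_iff₀ (by positivity) hγ, one_mul, sq]
      exact mul_le_mul ha ha hγ.le (by linarith)
    have hfrac2 : |γ / (q + γ) ^ 2 - γ / (q' + γ) ^ 2| ≤ 2 / γ ^ 2 * |q - q'| := by
      have h := frac_diff_le hγ ha hb
      rwa [show q + γ - (q' + γ) = q - q' by ring] at h
    calc ‖GammaDrift γ k φ θ r z ε - GammaDrift γ k φ θ' r' z' ε‖
        ≤ ‖(γ / (q + γ) ^ 2) • (u - v)‖ + ‖(γ / (q + γ) ^ 2 - γ / (q' + γ) ^ 2) • v‖ := by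
          rw [hdecomp]
          exact norm_add_le _ _
      _ ≤ (1 / γ) * ‖u - v‖ + (2 / γ ^ 2 * |q - q'|) * Bk := by
          refine add_le_add ?_ ?_
          · rw [norm_smul, Real.norm_eq_abs]
            exact mul_le_mul_of_nonneg_right hfrac1 (norm_nonneg _)
          · rw [norm_smul, Real.norm_eq_abs]
            exact mul_le_mul hfrac2 hvnorm (norm_nonneg _) (by positivity)
      _ ≤ (1 / γ) * (Kk * ((aφ * ‖ε‖ + bφ + 1) * ‖((θ, z) : Esp dθ × Esp dz) - (θ', z')‖)
            + Kk * (W1 r r').toReal)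
          + (2 / γ ^ 2 * (Bk * ((aφ * ‖ε‖ + bφ + 1) *
              ‖((θ, z) : Esp dθ × Esp dz) - (θ', z')‖) + Bk * (W1 r r').toReal)) * Bk := by
          refine add_le_add (mul_le_mul_of_nonneg_left hudiff (by positivity)) ?_
          exact mul_le_mul_of_nonneg_right
            (mul_le_mul_of_nonneg_left hqdiff (by positivity)) hBk.le
      _ = (Kk / γ + 2 * Bk ^ 2 / γ ^ 2) * ((aφ * ‖ε‖ + bφ + 1) *
            ‖((θ, z) : Esp dθ × Esp dz) - (θ', z')‖ + (W1 r r').toReal) := by ring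
      _ ≤ (Kk / γ + 2 * Bk ^ 2 / γ ^ 2) * ((aφ * ‖ε‖ + bφ + 1) *
            (‖((θ, z) : Esp dθ × Esp dz) - (θ', z')‖ + (W1 r r').toReal)) := by
          refine mul_le_mul_of_nonneg_left ?_ (by positivity)
          have h1 : (0:ℝ) ≤ (W1 r r').toReal := ENNReal.toReal_nonneg
          have h2 : (0:ℝ) ≤ aφ * ‖ε‖ + bφ := by positivity
          have h3 : (W1 r r').toReal ≤ (aφ * ‖ε‖ + bφ + 1) * (W1 r r').toReal :=
            le_mul_of_one_le_left h1 (by linarith)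
          rw [mul_add]
          exact add_le_add le_rfl h3
      _ ≤ ((Kk / γ + 2 * Bk ^ 2 / γ ^ 2) * (aφ + 1) * ‖ε‖ +
            (Kk / γ + 2 * Bk ^ 2 / γ ^ 2) * (bφ + 1)) *
            (‖((θ, z) : Esp dθ × Esp dz) - (θ', z')‖ + (W1 r r').toReal) := by
          rw [← mul_assoc]
          refine mul_le_mul_of_nonneg_right ?_
            (add_nonneg (norm_nonneg (((θ, z) : Esp dθ × Esp dz) - (θ', z')))
              (ENNReal.toReal_nonneg (a := W1 r r')))
          have hC : (0:ℝ) < Kk / γ + 2 * Bk ^ 2 / γ ^ 2 := by positivity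
          have h4 : (0:ℝ) ≤ (Kk / γ + 2 * Bk ^ 2 / γ ^ 2) * ‖ε‖ :=
            mul_nonneg hC.le (norm_nonneg _)
          linarith [h4]
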